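/- For any strictly monotone solution u : ℤ → ℝ of the K=4 cross-ratio scheme, the sequence w(m) = 1/(u(m+1) - u(m)) satisfies the second-order linear recurrence w(m+2) - 2w(m+1) + w(m) = constant in the sense that w(m+2) - 2w(m+1) + w(m) takes the same value for all m. -/

import Mathlib

theorem stmt_19 (u : ℤ → ℝ) (hmono : StrictMono u)
    (hscheme : ∀ m : ℤ, (u (m + 3) - u (m + 1)) * (u (m + 2) - u m)
      = 4 * ((u (m + 3) - u (m + 2)) * (u (m + 1) - u m)))
    (w : ℤ → ℝ) (hw : ∀ m : ℤ, w m = 1 / (u (m + 1) - u m)) :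
    ∀ m : ℤ, w (m + 2) - 2 * w (m + 1) + w m = w 2 - 2 * w 1 + w 0 := by
  have hd : ∀ m : ℤ, 0 < u (m + 1) - u m := by
    intro m
    have := hmono (show m < m + 1 by omega)
    linarith
  have hwpos : ∀ m : ℤ, 0 < w m := by
    intro m; rw [hw]; exact div_pos one_pos (hd m)
  -- key quadratic relation on w
  have hkey : ∀ m : ℤ, (w (m + 2) + w (m + 1)) * (w (m + 1) + w m) = 4 * w (m + 1) ^ 2 := by
    intro m
    have ha := hd m
    have hb := hd (m + 1)
    have hc := hd (m + 2)
    have e1 : w m = 1 / (u (m + 1) - u m) := hw m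
    have e2 : w (m + 1) = 1 / (u (m + 2) - u (m + 1)) := by
      rw [hw]; ring_nf
    have e3 : w (m + 2) = 1 / (u (m + 3) - u (m + 2)) := by
      rw [hw]; ring_nf
    have hb' : u (m + 1 + 1) - u (m + 1) = u (m + 2) - u (m + 1) := by ring_nf
    have hc' : u (m + 2 + 1) - u (m + 2) = u (m + 3) - u (m + 2) := by ring_nf
    rw [hb'] at hb
    rw [hc'] at hc
    have hs := hscheme m
    rw [e1, e2, e3]
    field_simp
    nlinarith [hs, ha, hb, hc]
  -- step: second difference is invariant under shift
  have hstep : ∀ m : ℤ, w (m + 3) - 2 * w (m + 2) + w (m + 1)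
      = w (m + 2) - 2 * w (m + 1) + w m := by
    intro m
    have hA := hkey m
    have hB := hkey (m + 1)
    have hB' : (w (m + 3) + w (m + 2)) * (w (m + 2) + w (m + 1)) = 4 * w (m + 2) ^ 2 := by
      have h1 : (m + 1) + 2 = m + 3 := by ring
      have h2 : (m + 1) + 1 = m + 2 := by ring
      rw [h1, h2] at hB
      exact hB
    have hpos : w (m + 1) + w (m + 2) ≠ 0 := by
      have := hwpos (m + 1); have := hwpos (m + 2); positivity
    have h0 : (w (m + 3) - 3 * w (m + 2) + 3 * w (m + 1) - w m) * (w (m + 1) + w (m + 2)) = 0 := by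
      linear_combination hB' - hA
    rcases mul_eq_zero.mp h0 with h | h
    · linarith
    · exact absurd h hpos
  -- now induction over ℤ
  have hD : ∀ m : ℤ, w (m + 2) - 2 * w (m + 1) + w m = w 2 - 2 * w 1 + w 0 := by
    intro m
    induction m using Int.induction_on with
    | zero => norm_num
    | succ n ih =>
      have := hstep n
      have h1 : (n : ℤ) + 1 + 2 = n + 3 := by ring
      have h2 : (n : ℤ) + 1 + 1 = n + 2 := by ring
      rw [h1, h2]
      linarith
    | pred n ih =>
      have := hstep (-(n : ℤ) - 1)
      have h1 : -(n : ℤ) - 1 + 3 = -n + 2 := by ring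
      have h2 : -(n : ℤ) - 1 + 2 = -n + 1 := by ring
      have h3 : -(n : ℤ) - 1 + 1 = -n := by ring
      rw [h1, h2, h3] at this
      have h4 : -(n : ℤ) - 1 + 2 = -n + 1 := by ring
      rw [show (-(n:ℤ) - 1 + 2) = -n + 1 from by ring, show (-(n:ℤ) - 1 + 1) = -n from by ring]
      linarith
  exact hD
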